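/- Let L/M be a field extension that is not purely inseparable of finite exponent, and suppose L is infinite. Then there does not exist a nonconstant rational function φ ∈ M(x) such that φ(d) ∈ M for all but finitely many d ∈ L. -/

import Mathlib

open Polynomial

/-- `L/M` is purely inseparable of finite exponent: either `L = M` (the trivial,
characteristic-zero, form), or `char L = p > 0` and there is `e` with `a^{p^e} ∈ M`
for all `a : L`. -/
def PurelyInsepFinExp {L : Type*} [Field L] (M : Subfield L) : Prop :=
  (∀ a : L, a ∈ M) ∨
    ∃ p e : ℕ, p.Prime ∧ CharP L p ∧ ∀ a : L, a ^ p ^ e ∈ M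

private lemma aux_comp_shift_sub {R : Type*} [CommRing R] (p : R[X]) (a b : R) :
    (p.comp (X + C a)).comp (X - C b) = p.comp (X + C (a - b)) := by
  rw [Polynomial.comp_assoc]
  congr 1
  rw [add_comp, X_comp, C_comp]
  rw [C_sub]; ring

private lemma aux_comp_shift_cancel {R : Type*} [CommRing R] (p : R[X]) (a : R) :
    (p.comp (X + C a)).comp (X - C a) = p := by
  rw [aux_comp_shift_sub, sub_self, C_0, add_zero, comp_X]

private lemma aux_eval_comp_shift {R : Type*} [CommRing R] (p : R[X]) (a x : R) :
    (p.comp (X + C a)).eval x = p.eval (x + a) := by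
  simp [eval_comp]

private lemma aux_coeff_pow_pred {R : Type*} [CommRing R] (a : R) (n : ℕ) (hn : n ≠ 0) :
    ((X - C a) ^ n).coeff (n - 1) = -((n : R) * a) := by
  have h1 : (X - C a) = X + C (-a) := by rw [map_neg]; ring
  have h2 : n - (n - 1) = 1 := by omega
  have h3 : n.choose (n - 1) = n := by
    rw [Nat.choose_symm (show 1 ≤ n by omega), Nat.choose_one_right]
  rw [h1, coeff_X_add_C_pow, h2, h3]
  ring

private lemma aux_main {L : Type*} [Field L] [Infinite L] (M : Subfield L) (f g : L[X])
    (f₀ g₀ : Polynomial ↥M)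
    (hf₀ : f₀.map (algebraMap ↥M L) = f) (hg₀ : g₀.map (algebraMap ↥M L) = g)
    (hg0 : g ≠ 0) (hnc : ∀ c : L, f ≠ C c * g)
    (S : Set L) (hS : Sᶜ.Finite)
    (hSg : ∀ d ∈ S, g.eval d ≠ 0) (hSM : ∀ d ∈ S, f.eval d / g.eval d ∈ M) :
    PurelyInsepFinExp M := by
  classical
  set σ : ↥M →+* L := algebraMap ↥M L with hσdef
  set A := AlgebraicClosure L with hAdef
  set ι : L →+* A := algebraMap L A with hιdef
  have hιinj : Function.Injective ι := ι.injective
  set κ : ↥M →+* A := ι.comp σ with hκdef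
  set N : ℕ := max f.natDegree g.natDegree with hNdef
  have hSinf : S.Infinite := by simpa using hS.infinite_compl
  have haeval : ∀ (q : Polynomial ↥M) (x : L), Polynomial.aeval x q = (q.map σ).eval x := by
    intro q x; rw [aeval_def, eval_map]
  -- fiber polynomials: every element of S is a root of a nonzero M-polynomial of degree ≤ N
  have hfib : ∀ d ∈ S, ∃ F₀ : Polynomial ↥M,
      F₀ ≠ 0 ∧ Polynomial.aeval d F₀ = 0 ∧ F₀.natDegree ≤ N := by
    intro d hd
    obtain ⟨c₀, hc₀⟩ : ∃ c₀ : ↥M, (c₀ : L) = f.eval d / g.eval d := ⟨⟨_, hSM d hd⟩, rfl⟩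
    have hmap : (f₀ - C c₀ * g₀).map σ = f - C (c₀ : L) * g := by
      rw [Polynomial.map_sub, Polynomial.map_mul, map_C, hf₀, hg₀]; rfl
    refine ⟨f₀ - C c₀ * g₀, ?_, ?_, ?_⟩
    · intro h0
      apply hnc (c₀ : L)
      have := congrArg (Polynomial.map σ) h0
      rw [hmap, Polynomial.map_zero, sub_eq_zero] at this
      exact this
    · rw [haeval, hmap]
      simp only [eval_sub, eval_mul, eval_C]
      rw [hc₀, div_mul_cancel₀ _ (hSg d hd), sub_self]
    · have : ((f₀ - C c₀ * g₀).map σ).natDegree = (f₀ - C c₀ * g₀).natDegree :=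
        natDegree_map σ
      rw [← this, hmap]
      refine le_trans (natDegree_sub_le _ _) (max_le (le_max_left _ _) ?_)
      exact le_trans (natDegree_C_mul_le _ _) (le_max_right _ _)
  have hint : ∀ d ∈ S, IsIntegral ↥M d := by
    intro d hd
    obtain ⟨F₀, h1, h2, _⟩ := hfib d hd
    exact IsAlgebraic.isIntegral ⟨F₀, h1, h2⟩
  have hmindeg : ∀ d ∈ S, (minpoly ↥M d).natDegree ≤ N := by
    intro d hd
    obtain ⟨F₀, h1, h2, h3⟩ := hfib d hd
    exact le_trans (natDegree_le_natDegree (minpoly.degree_le_of_ne_zero ↥M d h1 h2)) h3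
  -- M is infinite
  have hMinf : (M : Set L).Infinite := by
    by_contra hfin'
    rw [Set.not_infinite] at hfin'
    apply hSinf
    apply Set.Finite.subset (hfin'.biUnion
      (fun c (_ : c ∈ (M : Set L)) => finite_setOf_isRoot (p := f - C c * g)
        (sub_ne_zero.mpr (hnc c))))
    intro d hd
    refine Set.mem_biUnion (hSM d hd) ?_
    show (f - C (f.eval d / g.eval d) * g).IsRoot d
    simp only [IsRoot, eval_sub, eval_mul, eval_C]
    rw [div_mul_cancel₀ _ (hSg d hd), sub_self]
  -- translation sets
  have hShift : ∀ d : L, {m : L | m ∈ M ∧ d + m ∈ S}.Infinite := by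
    intro d
    have h1 : ((fun m : L => d + m) ⁻¹' Sᶜ).Finite :=
      Set.Finite.preimage (Set.injOn_of_injective (add_right_injective d)) hS
    apply (hMinf.diff h1).mono
    rintro m ⟨hm1, hm2⟩
    exact ⟨hm1, not_not.mp hm2⟩
  have hScale : ∀ d : L, d ≠ 0 → {c : L | c ∈ M ∧ c ≠ 0 ∧ c * d ∈ S}.Infinite := by
    intro d hd0
    have h1 : ((fun c : L => c * d) ⁻¹' Sᶜ).Finite :=
      Set.Finite.preimage (Set.injOn_of_injective (fun a b hab => mul_right_cancel₀ hd0 hab)) hS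
    apply ((hMinf.diff h1).diff (Set.finite_singleton 0)).mono
    rintro c ⟨⟨hc1, hc2⟩, hc3⟩
    exact ⟨hc1, by simpa using hc3, not_not.mp hc2⟩
  -- Lemma A
  have hA : ∀ d ∈ S, ∀ d' : A, ((minpoly ↥M d).map κ).eval d' = 0 →
      (f.map ι).comp (X + C (ι d)) * (g.map ι).comp (X + C d') =
        (f.map ι).comp (X + C d') * (g.map ι).comp (X + C (ι d)) := by
    intro d hd d' hd'
    rw [← sub_eq_zero]
    apply Polynomial.eq_zero_of_infinite_isRoot
    apply Set.Infinite.mono (s := ι '' {m : L | m ∈ M ∧ d + m ∈ S})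
    swap
    · exact (hShift d).image (Set.injOn_of_injective hιinj)
    rintro _ ⟨m, ⟨hmM, hmS⟩, rfl⟩
    obtain ⟨c₀, hc₀⟩ : ∃ c₀ : ↥M, (c₀ : L) = f.eval (d + m) / g.eval (d + m) :=
      ⟨⟨_, hSM _ hmS⟩, rfl⟩
    have hgm : g.eval (d + m) ≠ 0 := hSg _ hmS
    have hfm : f.eval (d + m) = (c₀ : L) * g.eval (d + m) := by
      rw [hc₀, div_mul_cancel₀ _ hgm]
    obtain ⟨m₀, hm₀⟩ : ∃ m₀ : ↥M, (m₀ : L) = m := ⟨⟨m, hmM⟩, rfl⟩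
    set q₀ : Polynomial ↥M := f₀.comp (X + C m₀) - C c₀ * g₀.comp (X + C m₀) with hq₀def
    have hσm : σ m₀ = m := hm₀
    have hσc : σ c₀ = (c₀ : L) := rfl
    have hq₀map : q₀.map σ = f.comp (X + C m) - C (c₀ : L) * g.comp (X + C m) := by
      simp only [hq₀def, Polynomial.map_sub, Polynomial.map_mul, Polynomial.map_comp,
        Polynomial.map_add, Polynomial.map_X, map_C, hf₀, hg₀, hσm, hσc]
    have hq₀d : Polynomial.aeval d q₀ = 0 := by
      rw [haeval, hq₀map]
      simp only [eval_sub, eval_mul, eval_C, aux_eval_comp_shift]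
      rw [hfm, sub_self]
    obtain ⟨h, hh⟩ := minpoly.dvd ↥M d hq₀d
    have hq₀root : (q₀.map κ).eval d' = 0 := by
      rw [hh, Polynomial.map_mul, eval_mul, hd', zero_mul]
    have hq₀κ : q₀.map κ =
        (f.map ι).comp (X + C (ι m)) - C (ι (c₀ : L)) * (g.map ι).comp (X + C (ι m)) := by
      have hmm : q₀.map κ = (q₀.map σ).map ι := by
        rw [Polynomial.map_map]
      simp only [hmm, hq₀map, Polynomial.map_sub, Polynomial.map_mul, Polynomial.map_comp,
        Polynomial.map_add, Polynomial.map_X, map_C]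
    have heq1 : (f.map ι).eval (d' + ι m) = ι (c₀ : L) * (g.map ι).eval (d' + ι m) := by
      rw [hq₀κ] at hq₀root
      simp only [eval_sub, eval_mul, eval_C, aux_eval_comp_shift] at hq₀root
      rwa [sub_eq_zero] at hq₀root
    have hevalι : ∀ (q : L[X]) (x : L), (q.map ι).eval (ι x) = ι (q.eval x) := by
      intro q x; rw [eval_map, eval₂_hom]
    have heq2 : (f.map ι).eval (ι d + ι m) = ι (c₀ : L) * (g.map ι).eval (ι d + ι m) := by
      rw [← map_add, hevalι, hevalι, hfm, map_mul]
    show Polynomial.IsRoot _ (ι m)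
    simp only [IsRoot, eval_sub, eval_mul, aux_eval_comp_shift]
    rw [add_comm (ι m) (ι d), add_comm (ι m) d', heq1, heq2]
    ring
  -- Lemma B: the set of "periods" cannot be infinite
  have hB : ∀ T' : Set A,
      (∀ t ∈ T', (f.map ι) * (g.map ι).comp (X + C t) =
        (f.map ι).comp (X + C t) * (g.map ι)) → T'.Infinite → False := by
    intro T' hT' hinf
    obtain ⟨x₀, hx₀⟩ : ∃ x₀ : L, g.eval x₀ ≠ 0 := by
      obtain ⟨x, hx⟩ := (finite_setOf_isRoot hg0).infinite_compl.nonempty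
      exact ⟨x, hx⟩
    have hevalι : ∀ (q : L[X]) (x : L), (q.map ι).eval (ι x) = ι (q.eval x) := by
      intro q x; rw [eval_map, eval₂_hom]
    have hR0 : (f.map ι).comp (X + C (ι x₀)) * C ((g.map ι).eval (ι x₀)) -
        C ((f.map ι).eval (ι x₀)) * (g.map ι).comp (X + C (ι x₀)) = 0 := by
      apply Polynomial.eq_zero_of_infinite_isRoot
      apply hinf.mono
      intro t ht
      have h2 := congrArg (Polynomial.eval (ι x₀)) (hT' t ht)
      simp only [eval_mul, aux_eval_comp_shift] at h2
      show Polynomial.IsRoot _ t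
      simp only [IsRoot, eval_sub, eval_mul, eval_C, aux_eval_comp_shift]
      rw [add_comm t (ι x₀)]
      linear_combination -h2
    have h3 := congrArg (fun p : A[X] => p.comp (X - C (ι x₀))) hR0
    simp only [sub_comp, mul_comp, C_comp, aux_comp_shift_cancel, zero_comp] at h3
    rw [sub_eq_zero, hevalι, hevalι] at h3
    have h4 : f * C (g.eval x₀) = C (f.eval x₀) * g := by
      apply Polynomial.map_injective ι hιinj
      simpa only [Polynomial.map_mul, map_C] using h3
    apply hnc (f.eval x₀ / g.eval x₀)
    have hCg : (C (g.eval x₀) : L[X]) ≠ 0 := by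
      simpa only [Ne, C_eq_zero] using hx₀
    have h5 : C (g.eval x₀) * f = C (g.eval x₀) * (C (f.eval x₀ / g.eval x₀) * g) := by
      rw [← mul_assoc, ← C_mul, mul_div_cancel₀ _ hx₀, mul_comm (C (g.eval x₀)) f, h4]
    exact mul_left_cancel₀ hCg h5
  -- Every root of the (mapped) minimal polynomial of an element of S equals that element
  have hroots : ∀ d ∈ S, ∀ d' : A, ((minpoly ↥M d).map κ).eval d' = 0 → d' = ι d := by
    intro d hd d' hd'
    by_contra hne
    have ht0 : d' - ι d ≠ 0 := sub_ne_zero.mpr hne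
    by_cases hd0 : d = 0
    · apply hne
      subst hd0
      have : minpoly ↥M (0 : L) = X - C 0 := by
        have := minpoly.eq_X_sub_C L (0 : ↥M)
        simpa using this
      rw [this] at hd'
      simp only [map_zero, C_0, sub_zero] at hd'
      rw [Polynomial.map_X, eval_X] at hd'
      rw [hd', map_zero]
    · have hTsub : ∀ c : L, c ∈ M → c ≠ 0 → c * d ∈ S →
          (f.map ι) * (g.map ι).comp (X + C (ι c * (d' - ι d))) =
            (f.map ι).comp (X + C (ι c * (d' - ι d))) * (g.map ι) := by
        intro c hcM hc0 hcdS
        obtain ⟨c₀, hc₀⟩ : ∃ c₀ : ↥M, (c₀ : L) = c := ⟨⟨c, hcM⟩, rfl⟩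
        have hq : Polynomial.aeval d ((minpoly ↥M (c * d)).comp (C c₀ * X)) = 0 := by
          rw [aeval_comp]
          have : Polynomial.aeval d (C c₀ * X) = c * d := by
            rw [map_mul, Polynomial.aeval_C, Polynomial.aeval_X,
              show (algebraMap ↥M L) c₀ = c from hc₀]
          rw [this, minpoly.aeval]
        obtain ⟨h, hh⟩ := minpoly.dvd ↥M d hq
        have hroot' : ((minpoly ↥M (c * d)).map κ).eval (ι c * d') = 0 := by
          have h1 : ((((minpoly ↥M (c * d)).comp (C c₀ * X))).map κ).eval d' = 0 := by
            rw [hh, Polynomial.map_mul, eval_mul, hd', zero_mul]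
          rw [Polynomial.map_comp, Polynomial.map_mul, map_C, Polynomial.map_X] at h1
          rw [eval_comp, eval_mul, eval_C, eval_X] at h1
          have hκc : κ c₀ = ι c := by
            rw [hκdef, RingHom.comp_apply, show σ c₀ = c from hc₀]
          rwa [hκc] at h1
        have hAcd := hA (c * d) hcdS (ι c * d') hroot'
        have h6 := congrArg (fun p : A[X] => p.comp (X - C (ι (c * d)))) hAcd
        simp only [mul_comp, aux_comp_shift_sub] at h6
        simp only [sub_self, C_0, add_zero, comp_X] at h6
        have e1 : ι c * d' - ι (c * d) = ι c * (d' - ι d) := by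
          rw [map_mul, mul_sub]
        rwa [e1] at h6
      apply hB ((fun c : L => ι c * (d' - ι d)) '' {c : L | c ∈ M ∧ c ≠ 0 ∧ c * d ∈ S})
      · rintro _ ⟨c, ⟨h1, h2, h3⟩, rfl⟩
        exact hTsub c h1 h2 h3
      · apply (hScale d hd0).image
        intro a _ b _ hab
        exact hιinj (mul_right_cancel₀ ht0 hab)
  -- the mapped minimal polynomial is a power of (X - ι d)
  have hpure : ∀ d ∈ S, (minpoly ↥M d).map κ =
      (X - C (ι d)) ^ (minpoly ↥M d).natDegree := by
    intro d hd
    have hmonic : ((minpoly ↥M d).map κ).Monic := (minpoly.monic (hint d hd)).map κ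
    have hm'0 : (minpoly ↥M d).map κ ≠ 0 := hmonic.ne_zero
    have hsplit : Splits ((minpoly ↥M d).map κ) :=
      IsAlgClosed.splits _
    have hcard : Multiset.card ((minpoly ↥M d).map κ).roots =
        ((minpoly ↥M d).map κ).natDegree := splits_iff_card_roots.mp hsplit
    have hrepl : ((minpoly ↥M d).map κ).roots =
        Multiset.replicate ((minpoly ↥M d).map κ).natDegree (ι d) := by
      rw [Multiset.eq_replicate]
      refine ⟨hcard, fun b hb => ?_⟩
      exact hroots d hd b ((mem_roots hm'0).mp hb)
    have hprod := prod_multiset_X_sub_C_of_monic_of_roots_card_eq hmonic hcard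
    rw [hrepl, Multiset.map_replicate, Multiset.prod_replicate] at hprod
    rw [← hprod, natDegree_map]
  -- degree facts
  have hdegpos : ∀ d ∈ S, (minpoly ↥M d).natDegree ≠ 0 := by
    intro d hd
    exact (minpoly.natDegree_pos (hint d hd)).ne'
  -- sum decomposition
  have hsum : ∀ a : L, ∃ s, s ∈ S ∧ a - s ∈ S := by
    intro a
    have h1 : ((fun s : L => a - s) ⁻¹' Sᶜ).Finite :=
      Set.Finite.preimage (Set.injOn_of_injective (fun x y hxy => sub_right_injective hxy)) hS
    obtain ⟨s, hs⟩ := (hS.union h1).infinite_compl.nonempty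
    rw [Set.mem_compl_iff, Set.mem_union] at hs
    push_neg at hs
    exact ⟨s, not_not.mp hs.1, not_not.mp hs.2⟩
  -- coefficients of mapped minpoly lie in the range of κ
  have hcoeffs : ∀ d ∈ S, ∀ i, ((minpoly ↥M d).map κ).coeff i ∈ κ.fieldRange := by
    intro d hd i
    rw [coeff_map]
    exact ⟨_, rfl⟩
  have hκι : ∀ x : L, (∃ y : ↥M, κ y = ι x) → x ∈ M := by
    rintro x ⟨y, hy⟩
    have : σ y = x := hιinj hy
    rw [← this]
    exact SetLike.coe_mem y
  obtain ⟨p, hp⟩ := CharP.exists L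
  haveI := hp
  have hcharA : CharP A p := charP_of_injective_ringHom hιinj p
  rcases CharP.char_is_prime_or_zero L p with hpp | hp0
  · -- positive characteristic
    haveI : Fact p.Prime := ⟨hpp⟩
    right
    refine ⟨p, N, hpp, hp, ?_⟩
    have hSpow : ∀ d ∈ S, d ^ p ^ N ∈ M := by
      intro d hd
      set k := (minpoly ↥M d).natDegree with hkdef
      have hk0 : k ≠ 0 := hdegpos d hd
      have hkN : k ≤ N := hmindeg d hd
      set e := k.factorization p with hedef
      set u := k / p ^ e with hudef
      have hku : k = p ^ e * u := (Nat.ordProj_mul_ordCompl_eq_self k p).symm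
      have hpu : ¬ p ∣ u := Nat.not_dvd_ordCompl hpp hk0
      have hu0 : u ≠ 0 := by
        intro h0
        rw [h0, mul_zero] at hku
        exact hk0 hku
      have hpe : (0:ℕ) < p ^ e := pow_pos hpp.pos e
      -- rewrite the mapped minpoly via expand
      have h1 : (minpoly ↥M d).map κ = expand A (p ^ e) ((X - C ((ι d) ^ p ^ e)) ^ u) := by
        rw [hpure d hd, ← hkdef, hku, pow_mul]
        rw [map_pow, map_sub, expand_X, expand_C]
        rw [sub_pow_char_pow, ← C_pow]
      have h2 : ((minpoly ↥M d).map κ).coeff (p ^ e * (u - 1)) =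
          -((u : A) * (ι d) ^ p ^ e) := by
        rw [h1, coeff_expand hpe]
        rw [if_pos (Dvd.intro _ rfl), Nat.mul_div_cancel_left _ hpe]
        exact aux_coeff_pow_pred _ u hu0
      have h3 : (ι d) ^ p ^ e ∈ κ.fieldRange := by
        have hc : -((u : A) * (ι d) ^ p ^ e) ∈ κ.fieldRange := by
          rw [← h2]; exact hcoeffs d hd _
        have hu' : ((u : A)) ≠ 0 := by
          rw [Ne, CharP.cast_eq_zero_iff A p]
          exact hpu
        have hrw : (ι d) ^ p ^ e = (-(-((u : A) * (ι d) ^ p ^ e))) / (u : A) := by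
          rw [neg_neg, mul_div_cancel_left₀ _ hu']
        rw [hrw]
        exact div_mem (neg_mem hc) ⟨(u : ↥M), by rw [map_natCast]⟩
      obtain ⟨y, hy⟩ := h3
      have hdm : d ^ p ^ e ∈ M := by
        apply hκι
        exact ⟨y, by rw [hy, map_pow]⟩
      have heN : e ≤ N := by
        have h5 : p ^ e ≤ k := Nat.le_of_dvd (Nat.pos_of_ne_zero hk0) ⟨u, hku⟩
        have h6 : e < p ^ e := Nat.lt_pow_self hpp.one_lt
        omega
      have : d ^ p ^ N = (d ^ p ^ e) ^ p ^ (N - e) := by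
        rw [← pow_mul, ← pow_add, Nat.add_sub_cancel' heN]
      rw [this]
      exact pow_mem hdm _
    intro a
    obtain ⟨s, hs, hs'⟩ := hsum a
    have : a ^ p ^ N = s ^ p ^ N + (a - s) ^ p ^ N := by
      rw [← add_pow_char_pow]
      rw [add_sub_cancel]
    rw [this]
    exact add_mem (hSpow s hs) (hSpow _ hs')
  · -- characteristic zero
    subst hp0
    haveI : CharZero L := CharP.charP_to_charZero L
    haveI : CharZero A := CharP.charP_to_charZero A
    left
    have hSM' : ∀ d ∈ S, d ∈ M := by
      intro d hd
      set k := (minpoly ↥M d).natDegree with hkdef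
      have hk0 : k ≠ 0 := hdegpos d hd
      have h2 : ((minpoly ↥M d).map κ).coeff (k - 1) = -((k : A) * ι d) := by
        rw [hpure d hd, ← hkdef]
        exact aux_coeff_pow_pred _ k hk0
      apply hκι
      have hc : -((k : A) * ι d) ∈ κ.fieldRange := by
        rw [← h2]; exact hcoeffs d hd _
      have hk' : ((k : A)) ≠ 0 := Nat.cast_ne_zero.mpr hk0
      have hrw : ι d = (-(-((k : A) * ι d))) / (k : A) := by
        rw [neg_neg, mul_div_cancel_left₀ _ hk']
      obtain ⟨y, hy⟩ := div_mem (neg_mem hc) (⟨(k : ↥M), by rw [map_natCast]⟩ :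
        (k : A) ∈ κ.fieldRange)
      exact ⟨y, by rw [hy, ← hrw]⟩
    intro a
    obtain ⟨s, hs, hs'⟩ := hsum a
    have : a = s + (a - s) := by ring
    rw [this]
    exact add_mem (hSM' s hs) (hSM' _ hs')

theorem stmt13 {L : Type*} [Field L] [Infinite L] (M : Subfield L)
    (h : ¬ PurelyInsepFinExp M) :
    ¬ ∃ f g : Polynomial L, (∀ i, f.coeff i ∈ M) ∧ (∀ i, g.coeff i ∈ M) ∧ g ≠ 0 ∧
      (¬ ∃ c : L, algebraMap (Polynomial L) (RatFunc L) f /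
          algebraMap (Polynomial L) (RatFunc L) g = RatFunc.C c) ∧
      {d : L | RatFunc.eval (RingHom.id L) d
          (algebraMap (Polynomial L) (RatFunc L) f /
            algebraMap (Polynomial L) (RatFunc L) g) ∉ M}.Finite := by
  rintro ⟨f, g, hfM, hgM, hg0, hnc, hfin⟩
  apply h
  have hfl : f ∈ Polynomial.lifts (algebraMap ↥M L) :=
    (Polynomial.lifts_iff_coeff_lifts f).mpr (fun n => ⟨⟨f.coeff n, hfM n⟩, rfl⟩)
  have hgl : g ∈ Polynomial.lifts (algebraMap ↥M L) :=
    (Polynomial.lifts_iff_coeff_lifts g).mpr (fun n => ⟨⟨g.coeff n, hgM n⟩, rfl⟩)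
  obtain ⟨f₀, hf₀⟩ := (Polynomial.mem_lifts f).mp hfl
  obtain ⟨g₀, hg₀⟩ := (Polynomial.mem_lifts g).mp hgl
  set r : RatFunc L := algebraMap (Polynomial L) (RatFunc L) f /
    algebraMap (Polynomial L) (RatFunc L) g with hrdef
  have hnc' : ∀ c : L, f ≠ C c * g := by
    intro c hc
    apply hnc
    refine ⟨c, ?_⟩
    rw [hrdef, hc, map_mul, RatFunc.algebraMap_C, mul_div_assoc,
      div_self (RatFunc.algebraMap_ne_zero hg0), mul_one]
  -- cross multiplication identity
  have hcross : r.num * g = f * r.denom := by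
    apply RatFunc.algebraMap_injective L
    rw [map_mul, map_mul]
    rw [← div_eq_div_iff (RatFunc.algebraMap_ne_zero r.denom_ne_zero)
      (RatFunc.algebraMap_ne_zero hg0)]
    rw [RatFunc.num_div_denom]
  have heval : ∀ d : L, g.eval d ≠ 0 → r.denom.eval d ≠ 0 →
      RatFunc.eval (RingHom.id L) d r = f.eval d / g.eval d := by
    intro d hgd hdd
    have h1 : RatFunc.eval (RingHom.id L) d r = r.num.eval d / r.denom.eval d := by
      show r.num.eval₂ (RingHom.id L) d / r.denom.eval₂ (RingHom.id L) d =
        r.num.eval d / r.denom.eval d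
      rfl
    rw [h1, div_eq_div_iff hdd hgd]
    have := congrArg (Polynomial.eval d) hcross
    simpa only [eval_mul] using this
  set S : Set L := {d : L | g.eval d ≠ 0 ∧ f.eval d / g.eval d ∈ M} with hSdef
  have hS : Sᶜ.Finite := by
    apply Set.Finite.subset (Set.Finite.union (Set.Finite.union
      (finite_setOf_isRoot hg0) (finite_setOf_isRoot r.denom_ne_zero)) hfin)
    intro d hd
    simp only [hSdef, Set.mem_compl_iff, Set.mem_setOf_eq, not_and] at hd
    by_cases h1 : g.eval d = 0
    · exact Or.inl (Or.inl h1)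
    by_cases h2 : r.denom.eval d = 0
    · exact Or.inl (Or.inr h2)
    · right
      show RatFunc.eval (RingHom.id L) d r ∉ M
      rw [heval d h1 h2]
      exact hd h1
  exact aux_main M f g f₀ g₀ hf₀ hg₀ hg0 hnc' S hS (fun d hd => hd.1) (fun d hd => hd.2)
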